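/- Let 𝕡 be the 4×4 orthogonal projection onto the singlet vector (|10⟩ − |01⟩)/√2 in ℂ² ⊗ ℂ². If ρ is a two-qubit density matrix that is SU(2)-invariant, i.e., (U ⊗ U) ρ (U ⊗ U)* = ρ for every U in the special unitary group SU(2), then there exists λ ∈ [0,1] such that ρ = (1−λ)/3 · (𝟙₄ − 𝕡) + λ 𝕡. -/

import Mathlib

open Kronecker
open Matrix
open scoped ComplexOrder

/-- The Pauli matrix `σ_x`. -/
def pauliX : Matrix (Fin 2) (Fin 2) ℂ := !![0, 1; 1, 0]
/-- The Pauli matrix `σ_y`. -/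
def pauliY : Matrix (Fin 2) (Fin 2) ℂ := !![0, -Complex.I; Complex.I, 0]
/-- The Pauli matrix `σ_z`. -/
def pauliZ : Matrix (Fin 2) (Fin 2) ℂ := !![1, 0; 0, -1]

/-- The orthogonal projection onto the singlet vector `(|10⟩ − |01⟩)/√2` in `ℂ² ⊗ ℂ²`,
`𝕡 = ¼(𝟙₄ − σ_x⊗σ_x − σ_y⊗σ_y − σ_z⊗σ_z)`. -/
noncomputable def singletProj : Matrix (Fin 2 × Fin 2) (Fin 2 × Fin 2) ℂ :=
  (1/4 : ℂ) • ((1 : Matrix (Fin 2 × Fin 2) (Fin 2 × Fin 2) ℂ)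
    - pauliX ⊗ₖ pauliX - pauliY ⊗ₖ pauliY - pauliZ ⊗ₖ pauliZ)

lemma kron_conjT' (U V : Matrix (Fin 2) (Fin 2) ℂ) : (U ⊗ₖ V)ᴴ = Uᴴ ⊗ₖ Vᴴ := by
  ext i j
  simp [Matrix.conjTranspose_apply, Matrix.kroneckerMap_apply, _root_.map_mul]

lemma kron_unitary' (U : Matrix (Fin 2) (Fin 2) ℂ) (hU : U * Uᴴ = 1) :
    (U ⊗ₖ U) * (U ⊗ₖ U)ᴴ = 1 := by
  rw [kron_conjT', ← Matrix.mul_kronecker_mul, hU, Matrix.one_kronecker_one]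

lemma comm_of_inv' (ρ A : Matrix (Fin 2 × Fin 2) (Fin 2 × Fin 2) ℂ) (hA : A * Aᴴ = 1)
    (h : A * ρ * Aᴴ = ρ) : A * ρ = ρ * A := by
  have h2 : Aᴴ * A = 1 := mul_eq_one_comm.mp hA
  calc A * ρ = A * ρ * (Aᴴ * A) := by rw [h2, Matrix.mul_one]
    _ = (A * ρ * Aᴴ) * A := by rw [Matrix.mul_assoc, Matrix.mul_assoc, Matrix.mul_assoc]
    _ = ρ * A := by rw [h]

/-- Every SU(2)-invariant two-qubit density matrix is of the form
`(1−λ)/3 · (𝟙₄ − 𝕡) + λ 𝕡` for some `λ ∈ [0,1]`. -/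
theorem su2_invariant_two_qubit_state (ρ : Matrix (Fin 2 × Fin 2) (Fin 2 × Fin 2) ℂ)
    (hpsd : ρ.PosSemidef) (htr : ρ.trace = 1)
    (hinv : ∀ U : Matrix (Fin 2) (Fin 2) ℂ, U * Uᴴ = 1 → U.det = 1 →
      (U ⊗ₖ U) * ρ * (U ⊗ₖ U)ᴴ = ρ) :
    ∃ lam : ℝ, lam ∈ Set.Icc (0 : ℝ) 1 ∧
      ρ = (((1 - lam) / 3 : ℝ) : ℂ) •
            ((1 : Matrix (Fin 2 × Fin 2) (Fin 2 × Fin 2) ℂ) - singletProj)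
          + ((lam : ℝ) : ℂ) • singletProj := by
  -- the four unitaries
  set UD : Matrix (Fin 2) (Fin 2) ℂ := !![Complex.I, 0; 0, -Complex.I] with hUDdef
  set US : Matrix (Fin 2) (Fin 2) ℂ := !![0, 1; -1, 0] with hUSdef
  set UR : Matrix (Fin 2) (Fin 2) ℂ := !![3/5, 4/5; -4/5, 3/5] with hURdef
  set UX : Matrix (Fin 2) (Fin 2) ℂ := !![3/5, 4/5*Complex.I; 4/5*Complex.I, 3/5] with hUXdef
  have hUD : UD * UDᴴ = 1 := by
    ext i j; fin_cases i <;> fin_cases j <;>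
      simp [hUDdef, Matrix.mul_apply, Fin.sum_univ_two, Matrix.one_apply]
  have hUDd : UD.det = 1 := by simp [hUDdef, Matrix.det_fin_two_of]
  have hUS : US * USᴴ = 1 := by
    ext i j; fin_cases i <;> fin_cases j <;>
      simp [hUSdef, Matrix.mul_apply, Fin.sum_univ_two, Matrix.one_apply]
  have hUSd : US.det = 1 := by simp [hUSdef, Matrix.det_fin_two_of]
  have hUR : UR * URᴴ = 1 := by
    ext i j; fin_cases i <;> fin_cases j <;>
      simp [hURdef, Matrix.mul_apply, Fin.sum_univ_two, Matrix.one_apply, map_ofNat] <;>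
      norm_num
  have hURd : UR.det = 1 := by simp [hURdef, Matrix.det_fin_two_of]; norm_num
  have hUX : UX * UXᴴ = 1 := by
    ext i j; fin_cases i <;> fin_cases j <;>
      simp [hUXdef, Matrix.mul_apply, Fin.sum_univ_two, Matrix.one_apply, map_ofNat] <;>
      ring_nf <;> simp [Complex.ext_iff] <;> norm_num
  have hUXd : UX.det = 1 := by
    simp [hUXdef, Matrix.det_fin_two_of]; ring_nf; simp [Complex.ext_iff]; norm_num
  -- commutation relations
  have cD := comm_of_inv' ρ _ (kron_unitary' UD hUD) (hinv UD hUD hUDd)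
  have cS := comm_of_inv' ρ _ (kron_unitary' US hUS) (hinv US hUS hUSd)
  have cR := comm_of_inv' ρ _ (kron_unitary' UR hUR) (hinv UR hUR hURd)
  have cX := comm_of_inv' ρ _ (kron_unitary' UX hUX) (hinv UX hUX hUXd)
  -- zeros from the diagonal unitary
  have h01 : ρ (0,0) (0,1) = 0 := by
    have e := congrArg (fun M => M ((0:Fin 2),(0:Fin 2)) ((0:Fin 2),(1:Fin 2))) cD
    simp [-Prod.mk_zero_zero, -Prod.mk_one_one, Matrix.mul_apply, Fintype.sum_prod_type, Fin.sum_univ_two,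
      Matrix.kroneckerMap_apply, hUDdef] at e
    linear_combination (-1/2 : ℂ) * e
  have h02 : ρ (0,0) (1,0) = 0 := by
    have e := congrArg (fun M => M ((0:Fin 2),(0:Fin 2)) ((1:Fin 2),(0:Fin 2))) cD
    simp [-Prod.mk_zero_zero, -Prod.mk_one_one, Matrix.mul_apply, Fintype.sum_prod_type, Fin.sum_univ_two,
      Matrix.kroneckerMap_apply, hUDdef] at e
    linear_combination (-1/2 : ℂ) * e
  have h10 : ρ (0,1) (0,0) = 0 := by
    have e := congrArg (fun M => M ((0:Fin 2),(1:Fin 2)) ((0:Fin 2),(0:Fin 2))) cD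
    simp [-Prod.mk_zero_zero, -Prod.mk_one_one, Matrix.mul_apply, Fintype.sum_prod_type, Fin.sum_univ_two,
      Matrix.kroneckerMap_apply, hUDdef] at e
    linear_combination (1/2 : ℂ) * e
  have h20 : ρ (1,0) (0,0) = 0 := by
    have e := congrArg (fun M => M ((1:Fin 2),(0:Fin 2)) ((0:Fin 2),(0:Fin 2))) cD
    simp [-Prod.mk_zero_zero, -Prod.mk_one_one, Matrix.mul_apply, Fintype.sum_prod_type, Fin.sum_univ_two,
      Matrix.kroneckerMap_apply, hUDdef] at e
    linear_combination (1/2 : ℂ) * e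
  have h13 : ρ (0,1) (1,1) = 0 := by
    have e := congrArg (fun M => M ((0:Fin 2),(1:Fin 2)) ((1:Fin 2),(1:Fin 2))) cD
    simp [-Prod.mk_zero_zero, -Prod.mk_one_one, Matrix.mul_apply, Fintype.sum_prod_type, Fin.sum_univ_two,
      Matrix.kroneckerMap_apply, hUDdef] at e
    linear_combination (1/2 : ℂ) * e
  have h31 : ρ (1,1) (0,1) = 0 := by
    have e := congrArg (fun M => M ((1:Fin 2),(1:Fin 2)) ((0:Fin 2),(1:Fin 2))) cD
    simp [-Prod.mk_zero_zero, -Prod.mk_one_one, Matrix.mul_apply, Fintype.sum_prod_type, Fin.sum_univ_two,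
      Matrix.kroneckerMap_apply, hUDdef] at e
    linear_combination (-1/2 : ℂ) * e
  have h23 : ρ (1,0) (1,1) = 0 := by
    have e := congrArg (fun M => M ((1:Fin 2),(0:Fin 2)) ((1:Fin 2),(1:Fin 2))) cD
    simp [-Prod.mk_zero_zero, -Prod.mk_one_one, Matrix.mul_apply, Fintype.sum_prod_type, Fin.sum_univ_two,
      Matrix.kroneckerMap_apply, hUDdef] at e
    linear_combination (1/2 : ℂ) * e
  have h32 : ρ (1,1) (1,0) = 0 := by
    have e := congrArg (fun M => M ((1:Fin 2),(1:Fin 2)) ((1:Fin 2),(0:Fin 2))) cD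
    simp [-Prod.mk_zero_zero, -Prod.mk_one_one, Matrix.mul_apply, Fintype.sum_prod_type, Fin.sum_univ_two,
      Matrix.kroneckerMap_apply, hUDdef] at e
    linear_combination (-1/2 : ℂ) * e
  -- relations from the swap unitary
  have hs1 : ρ (1,1) (1,1) = ρ (0,0) (0,0) := by
    have e := congrArg (fun M => M ((0:Fin 2),(0:Fin 2)) ((1:Fin 2),(1:Fin 2))) cS
    simp [-Prod.mk_zero_zero, -Prod.mk_one_one, Matrix.mul_apply, Fintype.sum_prod_type, Fin.sum_univ_two,
      Matrix.kroneckerMap_apply, hUSdef] at e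
    linear_combination e
  have hs2 : ρ (1,0) (1,0) = ρ (0,1) (0,1) := by
    have e := congrArg (fun M => M ((0:Fin 2),(1:Fin 2)) ((1:Fin 2),(0:Fin 2))) cS
    simp [-Prod.mk_zero_zero, -Prod.mk_one_one, Matrix.mul_apply, Fintype.sum_prod_type, Fin.sum_univ_two,
      Matrix.kroneckerMap_apply, hUSdef] at e
    linear_combination e
  have hs3 : ρ (1,0) (0,1) = ρ (0,1) (1,0) := by
    have e := congrArg (fun M => M ((0:Fin 2),(1:Fin 2)) ((0:Fin 2),(1:Fin 2))) cS
    simp [-Prod.mk_zero_zero, -Prod.mk_one_one, Matrix.mul_apply, Fintype.sum_prod_type, Fin.sum_univ_two,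
      Matrix.kroneckerMap_apply, hUSdef] at e
    linear_combination e
  -- relations from the two rotations
  have hE1 : ρ (0,1) (0,1) + ρ (1,0) (0,1) - ρ (0,0) (0,0) + ρ (0,0) (1,1) = 0 := by
    have e := congrArg (fun M => M ((0:Fin 2),(0:Fin 2)) ((0:Fin 2),(1:Fin 2))) cR
    simp [-Prod.mk_zero_zero, -Prod.mk_one_one, Matrix.mul_apply, Fintype.sum_prod_type, Fin.sum_univ_two,
      Matrix.kroneckerMap_apply, hURdef] at e
    linear_combination (25/12 : ℂ) * e + (-4/3 : ℂ) * h31 + (-4/3 : ℂ) * h02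
  have hE2 : ρ (0,1) (0,1) + ρ (1,0) (0,1) - ρ (0,0) (0,0) - ρ (0,0) (1,1) = 0 := by
    have e := congrArg (fun M => M ((0:Fin 2),(0:Fin 2)) ((0:Fin 2),(1:Fin 2))) cX
    simp [-Prod.mk_zero_zero, -Prod.mk_one_one, Matrix.mul_apply, Fintype.sum_prod_type, Fin.sum_univ_two,
      Matrix.kroneckerMap_apply, hUXdef] at e
    have e2 : Complex.I * (ρ (0,1) (0,1) + ρ (1,0) (0,1)
        - ρ (0,0) (0,0) - ρ (0,0) (1,1)) = 0 := by
      linear_combination (25/12 : ℂ) * e + (4/3 : ℂ) * h31 + (-4/3 : ℂ) * h02 + (-4/3 : ℂ) * (ρ (1,1) (0,1) - ρ (0,0) (1,0)) * Complex.I_sq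
    exact (mul_eq_zero.mp e2).resolve_left Complex.I_ne_zero
  have h03 : ρ (0,0) (1,1) = 0 := by linear_combination (1/2 : ℂ) * hE1 - (1/2 : ℂ) * hE2
  have hc : ρ (1,0) (0,1) = ρ (0,0) (0,0) - ρ (0,1) (0,1) := by
    linear_combination (1/2 : ℂ) * hE1 + (1/2 : ℂ) * hE2
  -- hermitian facts
  have hH : ρᴴ = ρ := hpsd.1
  have hherm : ∀ i j, (starRingEnd ℂ) (ρ j i) = ρ i j := by
    intro i j
    have := congrArg (fun M => M i j) hH
    simpa [Matrix.conjTranspose_apply] using this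
  have h30 : ρ (1,1) (0,0) = 0 := by
    have := hherm (1,1) (0,0)
    rw [h03] at this; simpa [-Prod.mk_zero_zero, -Prod.mk_one_one] using this.symm
  have him0 : (ρ (0,0) (0,0)).im = 0 := by
    have := hherm (0,0) (0,0)
    have := congrArg Complex.im this
    simp [-Prod.mk_zero_zero, -Prod.mk_one_one] at this; linarith
  have him1 : (ρ (0,1) (0,1)).im = 0 := by
    have := hherm (0,1) (0,1)
    have := congrArg Complex.im this
    simp [-Prod.mk_zero_zero, -Prod.mk_one_one] at this; linarith
  -- trace
  have htr' : ρ (0,0) (0,0) + ρ (0,1) (0,1) + ρ (1,0) (1,0) + ρ (1,1) (1,1) = 1 := by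
    have := htr
    simp [-Prod.mk_zero_zero, -Prod.mk_one_one, Matrix.trace, Matrix.diag, Fintype.sum_prod_type, Fin.sum_univ_two] at this
    linear_combination this
  -- real parameters
  set a : ℝ := (ρ (0,0) (0,0)).re with ha
  set b : ℝ := (ρ (0,1) (0,1)).re with hb
  have htre : a + b + b + a = 1 := by
    have := congrArg Complex.im hs1
    have h1 := congrArg Complex.re hs1
    have h2 := congrArg Complex.re hs2
    have h3 := congrArg Complex.re htr'
    simp [-Prod.mk_zero_zero, -Prod.mk_one_one, Complex.add_re] at h1 h2 h3
    rw [h1, h2] at h3; linarith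
  have hcre : (ρ (1,0) (0,1)).re = a - b := by
    have := congrArg Complex.re hc
    simpa [-Prod.mk_zero_zero, -Prod.mk_one_one] using this
  have hcim : (ρ (1,0) (0,1)).im = 0 := by
    have := congrArg Complex.im hc
    simp [-Prod.mk_zero_zero, -Prod.mk_one_one] at this; rw [this, him0, him1]; ring
  -- positivity facts
  have hP0 : 0 ≤ a := by
    have h := hpsd.dotProduct_mulVec_nonneg (fun p => if p = ((0:Fin 2),(0:Fin 2)) then 1 else 0)
    simp [-Prod.mk_zero_zero, -Prod.mk_one_one, Matrix.mulVec, dotProduct, Fintype.sum_prod_type, Fin.sum_univ_two,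
      Prod.ext_iff] at h
    exact (Complex.le_def.mp h).1
  have hPs : 0 ≤ 4*b - 2*a := by
    have h := hpsd.dotProduct_mulVec_nonneg (fun p => if p = ((0:Fin 2),(1:Fin 2)) then 1
      else if p = ((1:Fin 2),(0:Fin 2)) then -1 else 0)
    simp [-Prod.mk_zero_zero, -Prod.mk_one_one, Matrix.mulVec, dotProduct, Fintype.sum_prod_type, Fin.sum_univ_two,
      Prod.ext_iff] at h
    have h' := (Complex.le_def.mp h).1
    have e1 := congrArg Complex.re hs2
    have e2 := congrArg Complex.re hs3
    simp [-Prod.mk_zero_zero, -Prod.mk_one_one, Complex.add_re, Complex.sub_re] at h' e1 e2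
    linarith
  -- choose lam
  refine ⟨2*b - a, ⟨by linarith, by linarith⟩, ?_⟩
  -- complex-valued entry facts
  have htrec : (a:ℂ) + b + b + a = 1 := by
    have := congrArg (fun r : ℝ => (r : ℂ)) htre
    push_cast at this
    linear_combination this
  have hv0 : ρ (0,0) (0,0) = (a : ℂ) := by
    apply Complex.ext
    · rw [Complex.ofReal_re, ha]
    · rw [Complex.ofReal_im, him0]
  have hv1 : ρ (0,1) (0,1) = (b : ℂ) := by
    apply Complex.ext
    · rw [Complex.ofReal_re, hb]
    · rw [Complex.ofReal_im, him1]
  have hv2 : ρ (1,0) (1,0) = (b : ℂ) := by rw [hs2, hv1]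
  have hv3 : ρ (1,1) (1,1) = (a : ℂ) := by rw [hs1, hv0]
  have hvc : ρ (1,0) (0,1) = (a : ℂ) - (b : ℂ) := by rw [hc, hv0, hv1]
  have hvc2 : ρ (0,1) (1,0) = (a : ℂ) - (b : ℂ) := by rw [← hs3, hvc]
  ext i j
  obtain ⟨i1, i2⟩ := i
  obtain ⟨j1, j2⟩ := j
  fin_cases i1 <;> fin_cases i2 <;> fin_cases j1 <;> fin_cases j2 <;>
    simp [-Prod.mk_zero_zero, -Prod.mk_one_one, singletProj, pauliX, pauliY, pauliZ,
      Matrix.kroneckerMap_apply, Matrix.add_apply, Matrix.sub_apply, Matrix.smul_apply,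
      Matrix.one_apply, smul_eq_mul, Prod.mk.injEq] <;>
    first
      | exact h01 | exact h02 | exact h03 | exact h10 | exact h13 | exact h20
      | exact h23 | exact h30 | exact h31 | exact h32
      | linear_combination hv0 + (1/3 : ℂ) * htrec
      | linear_combination hv1 + (1/6 : ℂ) * htrec
      | linear_combination hv2 + (1/6 : ℂ) * htrec
      | linear_combination hv3 + (1/3 : ℂ) * htrec
      | linear_combination hvc + (1/6 : ℂ) * htrec
      | linear_combination hvc2 + (1/6 : ℂ) * htrec
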